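/- arXiv:math/0609122 — 4 statements merged into one kernel-verified Lean document; each statement's English description precedes it below -/
import Mathlib

section
/- For every finite nonempty set S of negative integers, there exists a connected signed bipartite graph whose signed degree set equals S. -/
/-- A signed bipartite graph `G(U,V)`: a simple bipartite graph with nonempty
finite parts `U` and `V` in which each edge is labeled positive or negative. -/
structure SignedBipartiteGraph where
  U : Type
  V : Type
  [fU : Fintype U]
  [fV : Fintype V]
  [dU : DecidableEq U]
  [dV : DecidableEq V]
  nU : Nonempty U
  nV : Nonempty V
  /-- `pos u v = true` iff there is a positive edge `uv`. -/
  pos : U → V → Bool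
  /-- `neg u v = true` iff there is a negative edge `uv`. -/
  neg : U → V → Bool
  /-- An edge cannot be both positive and negative (simple graph). -/
  disj : ∀ u v, ¬(pos u v = true ∧ neg u v = true)

namespace SignedBipartiteGraph

attribute [instance] fU fV dU dV

variable (G : SignedBipartiteGraph)

/-- Adjacency of the underlying bipartite graph on `U ⊕ V`. -/
def adjFun : (G.U ⊕ G.V) → (G.U ⊕ G.V) → Prop
  | Sum.inl u, Sum.inr v => G.pos u v = true ∨ G.neg u v = true
  | Sum.inr v, Sum.inl u => G.pos u v = true ∨ G.neg u v = true
  | _, _ => False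

/-- The underlying simple graph on `U ⊕ V`. -/
def graph : SimpleGraph (G.U ⊕ G.V) where
  Adj := G.adjFun
  symm := ⟨by intro a b h; cases a <;> cases b <;> simp_all [adjFun]⟩
  loopless := ⟨by intro a h; cases a <;> simp_all [adjFun]⟩

/-- The signed bipartite graph is connected if its underlying graph is. -/
def Connected : Prop := G.graph.Connected

/-- Signed degree of a vertex in `U`: positive edges minus negative edges. -/
def sdegU (u : G.U) : ℤ :=
  ((Finset.univ.filter fun v => G.pos u v = true).card : ℤ) -
  ((Finset.univ.filter fun v => G.neg u v = true).card : ℤ)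

/-- Signed degree of a vertex in `V`. -/
def sdegV (v : G.V) : ℤ :=
  ((Finset.univ.filter fun u => G.pos u v = true).card : ℤ) -
  ((Finset.univ.filter fun u => G.neg u v = true).card : ℤ)

/-- The signed degree set: the set of distinct signed degrees of the vertices. -/
def sdegSet : Set ℤ := Set.range G.sdegU ∪ Set.range G.sdegV

end SignedBipartiteGraph

noncomputable def cnt (N : Finset ℕ) (x : ℕ) : ℕ := (N.filter (fun n => n ≤ x)).card

lemma cnt_mono (N : Finset ℕ) : Monotone (cnt N) := by
  intro a b h
  apply Finset.card_le_card
  intro x hx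
  have := Finset.mem_filter.mp hx
  exact Finset.mem_filter.mpr ⟨this.1, le_trans this.2 h⟩

lemma cnt_lt_card (N : Finset ℕ) {n : ℕ} (hn : n ∈ N) {x : ℕ} (hx : x < n) :
    cnt N x < N.card := by
  apply Finset.card_lt_card
  constructor
  · exact Finset.filter_subset _ _
  · intro h
    have := Finset.mem_filter.mp (h hn)
    omega

lemma cnt_key (N : Finset ℕ) {n : ℕ} (hn : n ∈ N) (hn1 : 1 ≤ n) (y : ℕ) :
    cnt N y < cnt N (n-1) + 1 ↔ y < n := by
  constructor
  · intro h
    by_contra hy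
    push_neg at hy
    have hsub : insert n (N.filter (fun n' => n' ≤ n-1)) ⊆ N.filter (fun n' => n' ≤ y) := by
      intro a ha
      rcases Finset.mem_insert.mp ha with rfl | ha
      · exact Finset.mem_filter.mpr ⟨hn, hy⟩
      · have := Finset.mem_filter.mp ha
        exact Finset.mem_filter.mpr ⟨this.1, by omega⟩
    have h2 : cnt N (n-1) + 1 ≤ cnt N y := by
      have := Finset.card_le_card hsub
      rwa [Finset.card_insert_of_notMem (by simp; omega)] at this
    omega
  · intro h
    have := cnt_mono N (show y ≤ n-1 by omega)
    omega

lemma cnt_strictmono (N : Finset ℕ) {a b : ℕ} (ha : a ∈ N)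
    (ha1 : 1 ≤ a) (hab : a < b) : cnt N (a-1) < cnt N (b-1) := by
  have h := (cnt_key N ha ha1 (b-1)).not
  simp only [not_lt] at h
  have := h.mpr (by omega)
  omega

lemma cnt_rank_surj (N : Finset ℕ) (hN1 : ∀ n ∈ N, 1 ≤ n) {r : ℕ} (hr : r < N.card) :
    ∃ n ∈ N, cnt N (n-1) = r := by
  classical
  let f : {n // n ∈ N} → Fin N.card := fun n =>
    ⟨cnt N ((n : ℕ) - 1), cnt_lt_card N n.2 (by have := hN1 _ n.2; omega)⟩
  have hinj : Function.Injective f := by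
    intro a b hab
    have h : cnt N ((a:ℕ)-1) = cnt N ((b:ℕ)-1) := congrArg Fin.val hab
    ext
    by_contra hne
    rcases lt_or_gt_of_ne hne with hlt | hlt
    · have := cnt_strictmono N a.2 (hN1 _ a.2) hlt; omega
    · have := cnt_strictmono N b.2 (hN1 _ b.2) hlt; omega
  have hsurj : Function.Surjective f := by
    have : Function.Bijective f := (Fintype.bijective_iff_injective_and_card f).mpr
      ⟨hinj, by simp⟩
    exact this.2
  obtain ⟨n, hn⟩ := hsurj ⟨r, hr⟩
  exact ⟨n, n.2, congrArg Fin.val hn⟩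

lemma card_fin_lt_eq (m n : ℕ) (h : n ≤ m) :
    (Finset.univ.filter fun v : Fin m => (v : ℕ) < n).card = n := by
  have he : (Finset.univ.filter fun v : Fin m => (v : ℕ) < n)
      = (Finset.range n).attachFin (fun x hx => lt_of_lt_of_le (Finset.mem_range.mp hx) h) := by
    ext v
    simp [Finset.mem_attachFin]
  rw [he, Finset.card_attachFin, Finset.card_range]

lemma deg_card_of (N : Finset ℕ) (hNne : N.Nonempty) {n : ℕ} (hn : n ∈ N) (hn1 : 1 ≤ n)
    {x : Fin (N.max' hNne)} (h : cnt N (x:ℕ) + (cnt N (n-1) + 1) = N.card) :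
    (Finset.univ.filter fun y : Fin (N.max' hNne) =>
      cnt N (x:ℕ) + cnt N (y:ℕ) < N.card).card = n := by
  have hiff : ∀ y : Fin (N.max' hNne),
      (cnt N (x:ℕ) + cnt N (y:ℕ) < N.card) ↔ (y:ℕ) < n := by
    intro y
    rw [← cnt_key N hn hn1 (y:ℕ)]
    omega
  simp only [hiff]
  exact card_fin_lt_eq _ n (N.le_max' n hn)

lemma deg_exists (N : Finset ℕ) (hNne : N.Nonempty) (hN1 : ∀ n ∈ N, 1 ≤ n)
    (x : Fin (N.max' hNne)) :
    ∃ n ∈ N, (Finset.univ.filter fun y : Fin (N.max' hNne) =>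
      cnt N (x:ℕ) + cnt N (y:ℕ) < N.card).card = n := by
  have hcx : cnt N (x:ℕ) < N.card := cnt_lt_card N (N.max'_mem hNne) x.isLt
  obtain ⟨n, hn, hr⟩ := cnt_rank_surj N hN1
    (show N.card - 1 - cnt N (x:ℕ) < N.card by omega)
  exact ⟨n, hn, deg_card_of N hNne hn (hN1 _ hn) (by omega)⟩

lemma deg_attained (N : Finset ℕ) (hNne : N.Nonempty) (hN1 : ∀ n ∈ N, 1 ≤ n)
    {n : ℕ} (hn : n ∈ N) :
    ∃ x : Fin (N.max' hNne), (Finset.univ.filter fun y : Fin (N.max' hNne) =>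
      cnt N (x:ℕ) + cnt N (y:ℕ) < N.card).card = n := by
  have h1 : cnt N (n-1) < N.card := cnt_lt_card N hn (by have := hN1 _ hn; omega)
  obtain ⟨n', hn', hr⟩ := cnt_rank_surj N hN1
    (show N.card - 1 - cnt N (n-1) < N.card by have := hNne.card_pos; omega)
  have hx : n' - 1 < N.max' hNne := by
    have := hN1 _ hn'; have := N.le_max' _ hn'
    have := hN1 _ (N.max'_mem hNne)
    omega
  refine ⟨⟨n'-1, hx⟩, deg_card_of N hNne hn (hN1 _ hn) ?_⟩
  show cnt N (n'-1) + (cnt N (n-1) + 1) = N.card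
  omega

lemma connected_aux (G : SignedBipartiteGraph) (u0 : G.U) (v0 : G.V)
    (h1 : ∀ v, G.neg u0 v = true) (h2 : ∀ u, G.neg u v0 = true) : G.Connected := by
  have hadj1 : ∀ v, G.graph.Adj (Sum.inl u0) (Sum.inr v) := fun v => Or.inr (h1 v)
  have hadj2 : ∀ u, G.graph.Adj (Sum.inl u) (Sum.inr v0) := fun u => Or.inr (h2 u)
  have hreach : ∀ a : G.U ⊕ G.V, G.graph.Reachable a (Sum.inl u0) := by
    intro a
    match a with
    | Sum.inl u => exact ((hadj2 u).reachable).trans ((hadj1 v0).reachable).symm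
    | Sum.inr v => exact ((hadj1 v).reachable).symm
  haveI : Nonempty (G.U ⊕ G.V) := ⟨Sum.inl u0⟩
  exact ⟨fun a b => (hreach a).trans (hreach b).symm⟩

lemma main_construction (N : Finset ℕ) (hNne : N.Nonempty) (hN1 : ∀ n ∈ N, 1 ≤ n) :
    ∃ G : SignedBipartiteGraph, G.Connected ∧
      G.sdegSet = {z : ℤ | ∃ n ∈ N, z = -(n : ℤ)} := by
  classical
  have hmN : N.max' hNne ∈ N := N.max'_mem hNne
  have hm1 : 1 ≤ N.max' hNne := hN1 _ hmN
  have hcnt0 : cnt N 0 = 0 := by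
    rw [cnt, Finset.card_eq_zero, Finset.filter_eq_empty_iff]
    intro n hn
    have := hN1 n hn
    omega
  have hcltk : ∀ x : Fin (N.max' hNne), cnt N (x : ℕ) < N.card :=
    fun x => cnt_lt_card N hmN x.isLt
  refine ⟨{ U := Fin (N.max' hNne), V := Fin (N.max' hNne),
            nU := ⟨⟨0, by omega⟩⟩, nV := ⟨⟨0, by omega⟩⟩,
            pos := fun _ _ => false,
            neg := fun x y => decide (cnt N (x:ℕ) + cnt N (y:ℕ) < N.card),
            disj := by simp }, ?_, ?_⟩
  · apply connected_aux _ (⟨0, by omega⟩ : Fin (N.max' hNne)) (⟨0, by omega⟩ : Fin (N.max' hNne))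
    · intro v
      have : cnt N ((⟨0, by omega⟩ : Fin (N.max' hNne)) : ℕ) + cnt N (v:ℕ) < N.card := by
        simpa [hcnt0] using hcltk v
      exact decide_eq_true this
    · intro u
      have : cnt N ((u:ℕ)) + cnt N ((⟨0, by omega⟩ : Fin (N.max' hNne)) : ℕ) < N.card := by
        simpa [hcnt0] using hcltk u
      exact decide_eq_true this
  · ext z
    simp only [SignedBipartiteGraph.sdegSet, SignedBipartiteGraph.sdegU,
      SignedBipartiteGraph.sdegV, Set.mem_union, Set.mem_range, Set.mem_setOf_eq,
      decide_eq_true_eq, Bool.false_eq_true, Finset.filter_false, Finset.card_empty,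
      Nat.cast_zero, zero_sub]
    constructor
    · rintro (⟨x, hx⟩ | ⟨x, hx⟩)
      · obtain ⟨n, hn, hc⟩ := deg_exists N hNne hN1 x
        exact ⟨n, hn, by rw [← hx, hc]⟩
      · obtain ⟨n, hn, hc⟩ := deg_exists N hNne hN1 x
        refine ⟨n, hn, ?_⟩
        rw [← hx]
        have he : (Finset.filter (fun u : Fin (N.max' hNne) => cnt N ↑u + cnt N ↑x < N.card)
            Finset.univ) = (Finset.filter
            (fun y : Fin (N.max' hNne) => cnt N ↑x + cnt N ↑y < N.card) Finset.univ) := by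
          apply Finset.filter_congr
          intro y _
          simp [Nat.add_comm]
        rw [he, hc]
    · rintro ⟨n, hn, rfl⟩
      obtain ⟨x, hc⟩ := deg_attained N hNne hN1 hn
      exact Or.inl ⟨x, by rw [hc]⟩

/-- Every finite nonempty set of negative integers is the signed degree set of
some connected signed bipartite graph. -/
theorem signed_degree_set_of_negative (S : Finset ℤ) (hS : S.Nonempty)
    (hneg : ∀ x ∈ S, x < 0) :
    ∃ G : SignedBipartiteGraph, G.Connected ∧ G.sdegSet = ↑S := by
  classical
  set N : Finset ℕ := S.image (fun s => (-s).toNat) with hN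
  have hNne : N.Nonempty := hS.image _
  have hN1 : ∀ n ∈ N, 1 ≤ n := by
    intro n hn
    obtain ⟨s, hs, rfl⟩ := Finset.mem_image.mp hn
    have := hneg s hs
    omega
  obtain ⟨G, hconn, hset⟩ := main_construction N hNne hN1
  refine ⟨G, hconn, ?_⟩
  rw [hset]
  ext z
  simp only [Set.mem_setOf_eq, Finset.coe_sort_coe, Finset.mem_coe]
  constructor
  · rintro ⟨n, hn, rfl⟩
    obtain ⟨s, hs, hsn⟩ := Finset.mem_image.mp hn
    have := hneg s hs
    have : -((((-s).toNat) : ℕ) : ℤ) = s := by omega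
    rw [← hsn] at *
    rwa [this]
  · intro hz
    refine ⟨(-z).toNat, Finset.mem_image.mpr ⟨z, hz, rfl⟩, ?_⟩
    have := hneg z hz
    omega
end

section
/- Let d1, d2, ..., dn be positive integers (n ≥ 1). Then there exists a connected signed bipartite graph whose signed degree set is exactly {d1, d1+d2, ..., d1+d2+...+dn}, the set of partial sums. -/
/-- For positive integers d₁, …, dₙ (n ≥ 1) there is a connected signed
bipartite graph whose signed degree set is exactly the set of partial sums
{d₁, d₁+d₂, …, d₁+⋯+dₙ}. -/
theorem signed_degree_set_partial_sums (n : ℕ) (hn : 1 ≤ n) (d : Fin n → ℤ)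
    (hd : ∀ i, 0 < d i) :
    ∃ G : SignedBipartiteGraph, G.Connected ∧
      G.sdegSet = Set.range (fun i : Fin n => ∑ j ∈ Finset.Iic i, d j) := by
  classical
  have hd0 : 0 < (d ⟨0, hn⟩).toNat := by have := hd ⟨0, hn⟩; omega
  have hdpos : ∀ j : Fin n, 0 < (d j).toNat := fun j => by have := hd j; omega
  set G : SignedBipartiteGraph :=
    { U := Σ i : Fin n, Fin (d i).toNat
      V := Σ i : Fin n, Fin (d i).toNat
      nU := ⟨⟨⟨0, hn⟩, ⟨0, hd0⟩⟩⟩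
      nV := ⟨⟨⟨0, hn⟩, ⟨0, hd0⟩⟩⟩
      pos := fun u v => decide (u.1.val + v.1.val < n)
      neg := fun _ _ => false
      disj := by simp } with hG
  have count : ∀ m : Fin n,
      ((Finset.univ.filter fun v : (Σ j : Fin n, Fin (d j).toNat) =>
          (decide (m.val + v.1.val < n)) = true).card : ℤ)
        = ∑ j ∈ Finset.Iic (⟨n - 1 - m.val, by omega⟩ : Fin n), d j := by
    intro m
    have h1 : (Finset.univ.filter fun v : (Σ j : Fin n, Fin (d j).toNat) =>
        (decide (m.val + v.1.val < n)) = true)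
        = (Finset.univ.filter fun j : Fin n => m.val + j.val < n).sigma
            (fun _ => Finset.univ) := by
      ext v
      simp [Finset.mem_sigma]
    rw [h1, Finset.card_sigma]
    have h2 : (Finset.univ.filter fun j : Fin n => m.val + j.val < n)
        = Finset.Iic (⟨n - 1 - m.val, by omega⟩ : Fin n) := by
      ext j
      simp only [Finset.mem_filter, Finset.mem_univ, true_and, Finset.mem_Iic,
        Fin.le_def]
      omega
    rw [h2]
    push_cast
    refine Finset.sum_congr rfl fun j _ => ?_
    simp [Finset.card_univ, Int.toNat_of_nonneg (hd j).le]
  have sdegU_eq : ∀ u : G.U,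
      G.sdegU u = ∑ j ∈ Finset.Iic (⟨n - 1 - u.1.val, by omega⟩ : Fin n), d j := by
    intro u
    have : G.sdegU u =
        ((Finset.univ.filter fun v : (Σ j : Fin n, Fin (d j).toNat) =>
          (decide (u.1.val + v.1.val < n)) = true).card : ℤ) - 0 := by
      simp [SignedBipartiteGraph.sdegU, hG, G]
    rw [this, sub_zero, count]
  have sdegV_eq : ∀ v : G.V,
      G.sdegV v = ∑ j ∈ Finset.Iic (⟨n - 1 - v.1.val, by omega⟩ : Fin n), d j := by
    intro v
    have heq : (Finset.univ.filter fun u : (Σ j : Fin n, Fin (d j).toNat) =>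
          (decide (u.1.val + v.1.val < n)) = true)
        = (Finset.univ.filter fun u : (Σ j : Fin n, Fin (d j).toNat) =>
          (decide (v.1.val + u.1.val < n)) = true) := by
      ext u; simp [Nat.add_comm]
    have : G.sdegV v =
        ((Finset.univ.filter fun u : (Σ j : Fin n, Fin (d j).toNat) =>
          (decide (u.1.val + v.1.val < n)) = true).card : ℤ) - 0 := by
      simp [SignedBipartiteGraph.sdegV, hG, G]
    rw [this, sub_zero, heq, count]
  refine ⟨G, ?_, ?_⟩
  · -- Connectivity
    have hbase : ∀ w : G.U ⊕ G.V,
        G.graph.Reachable w (Sum.inl ⟨⟨0, hn⟩, ⟨0, hd0⟩⟩) := by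
      intro w
      rcases w with u | v
      · have h1 : G.graph.Adj (Sum.inl u) (Sum.inr ⟨⟨0, hn⟩, ⟨0, hd0⟩⟩) := by
          change G.adjFun (Sum.inl u) (Sum.inr ⟨⟨0, hn⟩, ⟨0, hd0⟩⟩)
          simp [SignedBipartiteGraph.adjFun, hG, G]
        have h2 : G.graph.Adj (Sum.inr (⟨⟨0, hn⟩, ⟨0, hd0⟩⟩ : G.V))
            (Sum.inl ⟨⟨0, hn⟩, ⟨0, hd0⟩⟩) := by
          change G.adjFun (Sum.inr (⟨⟨0, hn⟩, ⟨0, hd0⟩⟩ : G.V)) (Sum.inl ⟨⟨0, hn⟩, ⟨0, hd0⟩⟩)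
          simp [SignedBipartiteGraph.adjFun, hG, G]
          omega
        exact (h1.toWalk.append h2.toWalk).reachable
      · have h1 : G.graph.Adj (Sum.inr v) (Sum.inl ⟨⟨0, hn⟩, ⟨0, hd0⟩⟩) := by
          change G.adjFun (Sum.inr v) (Sum.inl ⟨⟨0, hn⟩, ⟨0, hd0⟩⟩)
          simp [SignedBipartiteGraph.adjFun, hG, G]
        exact h1.toWalk.reachable
    show G.graph.Connected
    haveI : Nonempty (G.U ⊕ G.V) := ⟨Sum.inl ⟨⟨0, hn⟩, ⟨0, hd0⟩⟩⟩
    exact SimpleGraph.Connected.mk fun a b => (hbase a).trans (hbase b).symm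
  · -- Degree set
    ext z
    simp only [SignedBipartiteGraph.sdegSet, Set.mem_union, Set.mem_range]
    constructor
    · rintro (⟨u, rfl⟩ | ⟨v, rfl⟩)
      · exact ⟨⟨n - 1 - u.1.val, by omega⟩, (sdegU_eq u).symm⟩
      · exact ⟨⟨n - 1 - v.1.val, by omega⟩, (sdegV_eq v).symm⟩
    · rintro ⟨k, rfl⟩
      refine Or.inl ⟨⟨⟨n - 1 - k.val, by omega⟩, ⟨0, hdpos _⟩⟩, ?_⟩
      rw [sdegU_eq]
      congr 1
      congr 1
      rw [Fin.ext_iff]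
      simp
      omega
end

section
/- If S1 is a finite nonempty set of positive integers, then S1 ∪ {0} is the signed degree set of some connected signed bipartite graph. -/
namespace SBGConstr

variable (S₁ : Finset ℤ)

/-- U side: u_d (degree d), y_{d,i} gadgets (degree 0), b_d balancers (degree 0). -/
abbrev Uty : Type := (↥S₁) ⊕ ((Σ d : ↥S₁, Fin (d.1 - 1).toNat) ⊕ (↥S₁))
/-- V side: v_d (degree d), z_{d,i} gadgets (degree 0), z₀ = false, z₁ = true hubs. -/
abbrev Vty : Type := (↥S₁) ⊕ ((Σ d : ↥S₁, Fin (d.1 - 1).toNat) ⊕ Bool)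

def posF : Uty S₁ → Vty S₁ → Bool
  | Sum.inl d, Sum.inl d' => decide (d = d')
  | Sum.inl d, Sum.inr (Sum.inl x) => decide (x.1 = d)
  | Sum.inl _, Sum.inr (Sum.inr b) => !b
  | Sum.inr (Sum.inl x), Sum.inl d' => decide (x.1 = d')
  | Sum.inr (Sum.inl _), Sum.inr (Sum.inl _) => false
  | Sum.inr (Sum.inl _), Sum.inr (Sum.inr _) => false
  | Sum.inr (Sum.inr _), Sum.inl _ => false
  | Sum.inr (Sum.inr _), Sum.inr (Sum.inl _) => false
  | Sum.inr (Sum.inr _), Sum.inr (Sum.inr b) => b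

def negF : Uty S₁ → Vty S₁ → Bool
  | Sum.inl _, Sum.inl _ => false
  | Sum.inl _, Sum.inr (Sum.inl _) => false
  | Sum.inl _, Sum.inr (Sum.inr b) => b
  | Sum.inr (Sum.inl _), Sum.inl _ => false
  | Sum.inr (Sum.inl x), Sum.inr (Sum.inl y) => decide (x = y)
  | Sum.inr (Sum.inl _), Sum.inr (Sum.inr _) => false
  | Sum.inr (Sum.inr _), Sum.inl _ => false
  | Sum.inr (Sum.inr _), Sum.inr (Sum.inl _) => false
  | Sum.inr (Sum.inr _), Sum.inr (Sum.inr b) => !b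

theorem disjF : ∀ u v, ¬(posF S₁ u v = true ∧ negF S₁ u v = true) := by
  rintro (d | x | d) (d' | y | b) <;> simp [posF, negF]

variable (hS : S₁.Nonempty)

def G : SignedBipartiteGraph where
  U := Uty S₁
  V := Vty S₁
  nU := ⟨Sum.inl ⟨hS.choose, hS.choose_spec⟩⟩
  nV := ⟨Sum.inr (Sum.inr false)⟩
  pos := posF S₁
  neg := negF S₁
  disj := disjF S₁

theorem card_sigma_fiber {ι : Type*} [Fintype ι] [DecidableEq ι] (n : ι → ℕ) (d : ι) :
    (Finset.univ.filter (fun x : Σ i, Fin (n i) => x.1 = d)).card = n d := by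
  rw [Finset.card_filter, ← Finset.univ_sigma_univ, Finset.sum_sigma]
  simp [Finset.sum_ite_eq, Finset.card_univ, apply_ite Finset.card]

theorem sdegU_u (hpos : ∀ x ∈ S₁, 0 < x) (d : ↥S₁) :
    (G S₁ hS).sdegU (Sum.inl d) = d.1 := by
  have hd : 0 < d.1 := hpos d.1 d.2
  change ((Finset.univ.filter fun v : Vty S₁ => posF S₁ (Sum.inl d) v = true).card : ℤ) -
    ((Finset.univ.filter fun v : Vty S₁ => negF S₁ (Sum.inl d) v = true).card : ℤ) = d.1
  simp only [Finset.card_filter]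
  rw [Fintype.sum_sum_type, Fintype.sum_sum_type, Fintype.sum_sum_type, Fintype.sum_sum_type]
  simp [posF, negF, Finset.sum_ite_eq, Finset.sum_ite_eq', Fintype.sum_bool]
  rw [card_sigma_fiber (fun i : ↥S₁ => (i.1 - 1).toNat) d]
  omega

theorem sdegU_y (x : Σ d : ↥S₁, Fin (d.1 - 1).toNat) :
    (G S₁ hS).sdegU (Sum.inr (Sum.inl x)) = 0 := by
  change ((Finset.univ.filter fun v : Vty S₁ => posF S₁ (Sum.inr (Sum.inl x)) v = true).card : ℤ) -
    ((Finset.univ.filter fun v : Vty S₁ => negF S₁ (Sum.inr (Sum.inl x)) v = true).card : ℤ) = 0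
  simp only [Finset.card_filter]
  rw [Fintype.sum_sum_type, Fintype.sum_sum_type, Fintype.sum_sum_type, Fintype.sum_sum_type]
  simp [posF, negF, Finset.sum_ite_eq, Finset.sum_ite_eq', Fintype.sum_bool]

theorem sdegU_b (d : ↥S₁) :
    (G S₁ hS).sdegU (Sum.inr (Sum.inr d)) = 0 := by
  change ((Finset.univ.filter fun v : Vty S₁ => posF S₁ (Sum.inr (Sum.inr d)) v = true).card : ℤ) -
    ((Finset.univ.filter fun v : Vty S₁ => negF S₁ (Sum.inr (Sum.inr d)) v = true).card : ℤ) = 0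
  simp only [Finset.card_filter]
  rw [Fintype.sum_sum_type, Fintype.sum_sum_type, Fintype.sum_sum_type, Fintype.sum_sum_type]
  simp [posF, negF, Fintype.sum_bool]

theorem sdegV_v (hpos : ∀ x ∈ S₁, 0 < x) (d : ↥S₁) :
    (G S₁ hS).sdegV (Sum.inl d) = d.1 := by
  have hd : 0 < d.1 := hpos d.1 d.2
  change ((Finset.univ.filter fun u : Uty S₁ => posF S₁ u (Sum.inl d) = true).card : ℤ) -
    ((Finset.univ.filter fun u : Uty S₁ => negF S₁ u (Sum.inl d) = true).card : ℤ) = d.1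
  simp only [Finset.card_filter]
  rw [Fintype.sum_sum_type, Fintype.sum_sum_type, Fintype.sum_sum_type, Fintype.sum_sum_type]
  simp [posF, negF, Finset.sum_ite_eq, Finset.sum_ite_eq']
  rw [card_sigma_fiber (fun i : ↥S₁ => (i.1 - 1).toNat) d]
  omega

theorem sdegV_z (x : Σ d : ↥S₁, Fin (d.1 - 1).toNat) :
    (G S₁ hS).sdegV (Sum.inr (Sum.inl x)) = 0 := by
  change ((Finset.univ.filter fun u : Uty S₁ => posF S₁ u (Sum.inr (Sum.inl x)) = true).card : ℤ) -
    ((Finset.univ.filter fun u : Uty S₁ => negF S₁ u (Sum.inr (Sum.inl x)) = true).card : ℤ) = 0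
  simp only [Finset.card_filter]
  rw [Fintype.sum_sum_type, Fintype.sum_sum_type, Fintype.sum_sum_type, Fintype.sum_sum_type]
  simp [posF, negF, Finset.sum_ite_eq, Finset.sum_ite_eq']

theorem sdegV_hub (b : Bool) :
    (G S₁ hS).sdegV (Sum.inr (Sum.inr b)) = 0 := by
  change ((Finset.univ.filter fun u : Uty S₁ => posF S₁ u (Sum.inr (Sum.inr b)) = true).card : ℤ) -
    ((Finset.univ.filter fun u : Uty S₁ => negF S₁ u (Sum.inr (Sum.inr b)) = true).card : ℤ) = 0
  simp only [Finset.card_filter]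
  rw [Fintype.sum_sum_type, Fintype.sum_sum_type, Fintype.sum_sum_type, Fintype.sum_sum_type]
  cases b <;> simp [posF, negF]

theorem reach_hub (a : (G S₁ hS).U ⊕ (G S₁ hS).V) :
    (G S₁ hS).graph.Reachable a (Sum.inr (Sum.inr (Sum.inr false))) := by
  have adjuw : ∀ d : ↥S₁, (G S₁ hS).graph.Adj (Sum.inl (Sum.inl d))
      (Sum.inr (Sum.inr (Sum.inr false))) := by
    intro d
    simp [SignedBipartiteGraph.graph, SignedBipartiteGraph.adjFun, G, posF]
  rcases a with (d | x | d) | (d | x | b)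
  · exact (adjuw d).reachable
  · have h1 : (G S₁ hS).graph.Adj (Sum.inl (Sum.inr (Sum.inl x)))
        (Sum.inr (Sum.inr (Sum.inl x))) := by
      simp [SignedBipartiteGraph.graph, SignedBipartiteGraph.adjFun, G, posF, negF]
    have h2 : (G S₁ hS).graph.Adj (Sum.inl (Sum.inl x.1))
        (Sum.inr (Sum.inr (Sum.inl x))) := by
      simp [SignedBipartiteGraph.graph, SignedBipartiteGraph.adjFun, G, posF, negF]
    exact h1.reachable.trans (h2.reachable.symm.trans (adjuw x.1).reachable)
  · have h : (G S₁ hS).graph.Adj (Sum.inl (Sum.inr (Sum.inr d)))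
        (Sum.inr (Sum.inr (Sum.inr false))) := by
      simp [SignedBipartiteGraph.graph, SignedBipartiteGraph.adjFun, G, posF, negF]
    exact h.reachable
  · have h : (G S₁ hS).graph.Adj (Sum.inl (Sum.inl d)) (Sum.inr (Sum.inl d)) := by
      simp [SignedBipartiteGraph.graph, SignedBipartiteGraph.adjFun, G, posF]
    exact h.reachable.symm.trans (adjuw d).reachable
  · have h2 : (G S₁ hS).graph.Adj (Sum.inl (Sum.inl x.1))
        (Sum.inr (Sum.inr (Sum.inl x))) := by
      simp [SignedBipartiteGraph.graph, SignedBipartiteGraph.adjFun, G, posF, negF]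
    exact h2.reachable.symm.trans (adjuw x.1).reachable
  · cases b with
    | false => exact SimpleGraph.Reachable.refl _
    | true =>
      have h : (G S₁ hS).graph.Adj (Sum.inl (Sum.inl ⟨hS.choose, hS.choose_spec⟩))
          (Sum.inr (Sum.inr (Sum.inr true))) := by
        simp [SignedBipartiteGraph.graph, SignedBipartiteGraph.adjFun, G, posF, negF]
      exact h.reachable.symm.trans (adjuw _).reachable

theorem connected : (G S₁ hS).Connected := by
  haveI : Nonempty ((G S₁ hS).U ⊕ (G S₁ hS).V) := ⟨Sum.inr (Sum.inr (Sum.inr false))⟩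
  exact SimpleGraph.Connected.mk
    (fun a b => (reach_hub S₁ hS a).trans (reach_hub S₁ hS b).symm)

theorem degset (hpos : ∀ x ∈ S₁, 0 < x) :
    (G S₁ hS).sdegSet = ↑S₁ ∪ {0} := by
  ext t
  simp only [SignedBipartiteGraph.sdegSet, Set.mem_union, Set.mem_range,
    Set.mem_singleton_iff, Finset.coe_sort_coe, Finset.mem_coe]
  constructor
  · rintro (⟨a, rfl⟩ | ⟨a, rfl⟩)
    · rcases a with d | x | d
      · rw [sdegU_u S₁ hS hpos d]; exact Or.inl d.2
      · rw [sdegU_y S₁ hS x]; exact Or.inr rfl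
      · rw [sdegU_b S₁ hS d]; exact Or.inr rfl
    · rcases a with d | x | b
      · rw [sdegV_v S₁ hS hpos d]; exact Or.inl d.2
      · rw [sdegV_z S₁ hS x]; exact Or.inr rfl
      · rw [sdegV_hub S₁ hS b]; exact Or.inr rfl
  · rintro (ht | rfl)
    · exact Or.inl ⟨Sum.inl ⟨t, ht⟩, sdegU_u S₁ hS hpos ⟨t, ht⟩⟩
    · exact Or.inr ⟨Sum.inr (Sum.inr false), sdegV_hub S₁ hS false⟩

end SBGConstr

/-- If S₁ is a finite nonempty set of positive integers, then S₁ ∪ {0} is the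
signed degree set of some connected signed bipartite graph. -/
theorem signed_degree_set_positive_with_zero (S₁ : Finset ℤ) (hS : S₁.Nonempty)
    (hpos : ∀ x ∈ S₁, 0 < x) :
    ∃ G : SignedBipartiteGraph, G.Connected ∧ G.sdegSet = ↑S₁ ∪ {0} := by
  exact ⟨SBGConstr.G S₁ hS, SBGConstr.connected S₁ hS, SBGConstr.degset S₁ hS hpos⟩
end

section
/- If S1 is a finite nonempty set of positive integers and S2 is a finite nonempty set of negative integers, then S1 ∪ S2 is the signed degree set of some connected signed bipartite graph. -/
open Finset

namespace SDSaux

/-- Index type for both sides: for each value `x ∈ S`, two copies (`Bool`) of a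
block of `x.natAbs` vertices. -/
abbrev Idx (S : Finset ℤ) : Type := Σ x : {x : ℤ // x ∈ S}, Bool × Fin x.1.natAbs

variable (S : Finset ℤ) (a₀ b₀ : ℤ)

/-- Block-diagonal part of the signed adjacency matrix. -/
def base (u v : Idx S) : ℤ :=
  if u.1 = v.1 ∧ u.2.1 = v.2.1 then (if 0 < u.1.1 then 1 else -1) else 0

/-- Overlay connecting the blocks, with zero row and column sums. -/
def ov (u v : Idx S) : ℤ :=
  if (u.2.2 : ℕ) = 0 ∧ (v.2.2 : ℕ) = 0 ∧
      ((0 < u.1.1 ∧ v.1.1 = b₀) ∨ (u.1.1 < 0 ∧ v.1.1 = a₀)) then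
    (if u.2.1 = v.2.1 then 1 else -1) else 0

def ent (u v : Idx S) : ℤ := base S u v + ov S a₀ b₀ u v

/-- Flip the copy bit. -/
def flip : Idx S ≃ Idx S where
  toFun x := ⟨x.1, (!x.2.1, x.2.2)⟩
  invFun x := ⟨x.1, (!x.2.1, x.2.2)⟩
  left_inv := by rintro ⟨x, c, r⟩; simp
  right_inv := by rintro ⟨x, c, r⟩; simp

lemma ov_flip_right (u v : Idx S) : ov S a₀ b₀ u (flip S v) = - ov S a₀ b₀ u v := by
  rcases v with ⟨y, d, s⟩
  rcases u with ⟨x, c, r⟩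
  simp only [ov, flip, Equiv.coe_fn_mk]
  by_cases h : (r : ℕ) = 0 ∧ (s : ℕ) = 0 ∧ ((0 < x.1 ∧ y.1 = b₀) ∨ (x.1 < 0 ∧ y.1 = a₀))
  · rw [if_pos h]; simp only [h, and_self, or_true, ↓reduceIte]; cases c <;> cases d <;> simp
  · rw [if_neg h]; simp only [h, ↓reduceIte, neg_zero]

lemma ov_flip_left (u v : Idx S) : ov S a₀ b₀ (flip S u) v = - ov S a₀ b₀ u v := by
  rcases v with ⟨y, d, s⟩
  rcases u with ⟨x, c, r⟩
  simp only [ov, flip, Equiv.coe_fn_mk]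
  by_cases h : (r : ℕ) = 0 ∧ (s : ℕ) = 0 ∧ ((0 < x.1 ∧ y.1 = b₀) ∨ (x.1 < 0 ∧ y.1 = a₀))
  · rw [if_pos h]; simp only [h, and_self, or_true, ↓reduceIte]; cases c <;> cases d <;> simp
  · rw [if_neg h]; simp only [h, ↓reduceIte, neg_zero]

lemma sum_ov_row (u : Idx S) : ∑ v : Idx S, ov S a₀ b₀ u v = 0 := by
  have h := Equiv.sum_comp (flip S) (fun v => ov S a₀ b₀ u v)
  have h2 : ∑ v : Idx S, ov S a₀ b₀ u (flip S v) = - ∑ v : Idx S, ov S a₀ b₀ u v := by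
    rw [← Finset.sum_neg_distrib]
    exact Finset.sum_congr rfl fun v _ => ov_flip_right S a₀ b₀ u v
  rw [h] at h2; linarith

lemma sum_ov_col (v : Idx S) : ∑ u : Idx S, ov S a₀ b₀ u v = 0 := by
  have h := Equiv.sum_comp (flip S) (fun u => ov S a₀ b₀ u v)
  have h2 : ∑ u : Idx S, ov S a₀ b₀ (flip S u) v = - ∑ u : Idx S, ov S a₀ b₀ u v := by
    rw [← Finset.sum_neg_distrib]
    exact Finset.sum_congr rfl fun u _ => ov_flip_left S a₀ b₀ u v
  rw [h] at h2; linarith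

lemma sum_base_row (u : Idx S) : ∑ v : Idx S, base S u v = u.1.1 := by
  rw [← Finset.univ_sigma_univ, Finset.sum_sigma]
  rw [Finset.sum_eq_single u.1]
  · rw [Fintype.sum_prod_type]
    rw [Finset.sum_eq_single u.2.1]
    · simp only [base, and_self, if_true, eq_self_iff_true, true_and]
      simp only [Finset.sum_const, Finset.card_univ, Fintype.card_fin, nsmul_eq_mul]
      split_ifs <;> omega
    · intro b _ hb
      apply Finset.sum_eq_zero; intro s _
      simp only [base]
      rw [if_neg]; rintro ⟨-, h2⟩; exact hb h2.symm
    · simp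
  · intro y _ hy
    apply Finset.sum_eq_zero; intro p _
    simp only [base]
    rw [if_neg]; rintro ⟨h1, -⟩; exact hy h1.symm
  · simp

lemma base_symm (u v : Idx S) : base S u v = base S v u := by
  rcases u with ⟨x, c, r⟩; rcases v with ⟨y, d, s⟩
  simp only [base]
  by_cases h1 : x = y
  · subst h1
    by_cases h2 : c = d
    · subst h2; simp
    · rw [if_neg (by rintro ⟨-, h⟩; exact h2 h), if_neg (by rintro ⟨-, h⟩; exact h2 h.symm)]
  · rw [if_neg (by rintro ⟨h, -⟩; exact h1 h), if_neg (by rintro ⟨h, -⟩; exact h1 h.symm)]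

lemma sum_base_col (v : Idx S) : ∑ u : Idx S, base S u v = v.1.1 :=
  (Finset.sum_congr rfl fun u _ => base_symm S u v).trans (sum_base_row S v)

lemma sum_ent_row (u : Idx S) : ∑ v : Idx S, ent S a₀ b₀ u v = u.1.1 := by
  simp only [ent, Finset.sum_add_distrib, sum_base_row, sum_ov_row, add_zero]

lemma sum_ent_col (v : Idx S) : ∑ u : Idx S, ent S a₀ b₀ u v = v.1.1 := by
  simp only [ent, Finset.sum_add_distrib, sum_base_col, sum_ov_col, add_zero]

lemma ent_mem (ha : 0 < a₀) (hb : b₀ < 0) (u v : Idx S) :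
    ent S a₀ b₀ u v = 1 ∨ ent S a₀ b₀ u v = 0 ∨ ent S a₀ b₀ u v = -1 := by
  rcases u with ⟨x, c, r⟩; rcases v with ⟨y, d, s⟩
  simp only [ent, base, ov]
  by_cases hxy : x = y
  · have hval : x.1 = y.1 := congrArg Subtype.val hxy
    have hno : ¬((r : ℕ) = 0 ∧ (s : ℕ) = 0 ∧
        ((0 < x.1 ∧ y.1 = b₀) ∨ (x.1 < 0 ∧ y.1 = a₀))) := by omega
    rw [if_neg hno]
    split_ifs <;> omega
  · rw [if_neg (by rintro ⟨h, -⟩; exact hxy h)]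
    split_ifs <;> omega

end SDSaux

namespace SDSaux

lemma card_sub_card {ι : Type} [Fintype ι] (f : ι → ℤ)
    (h : ∀ i, f i = 1 ∨ f i = 0 ∨ f i = -1) :
    (((Finset.univ.filter fun i => f i = 1).card : ℤ) -
      ((Finset.univ.filter fun i => f i = -1).card : ℤ)) = ∑ i, f i := by
  rw [← Finset.sum_boole, ← Finset.sum_boole, ← Finset.sum_sub_distrib]
  refine Finset.sum_congr rfl fun i _ => ?_
  rcases h i with h' | h' | h' <;> rw [h'] <;> norm_num

/-- The constructed signed bipartite graph. -/
def mkGraph (S : Finset ℤ) (a₀ b₀ : ℤ) (ha : a₀ ∈ S) (ha0 : 0 < a₀) :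
    SignedBipartiteGraph where
  U := Idx S
  V := Idx S
  nU := ⟨⟨⟨a₀, ha⟩, (false, ⟨0, by simpa using Int.natAbs_pos.mpr (by omega)⟩)⟩⟩
  nV := ⟨⟨⟨a₀, ha⟩, (false, ⟨0, by simpa using Int.natAbs_pos.mpr (by omega)⟩)⟩⟩
  pos := fun u v => decide (ent S a₀ b₀ u v = 1)
  neg := fun u v => decide (ent S a₀ b₀ u v = -1)
  disj := by
    intro u v h
    simp only [decide_eq_true_eq] at h
    omega

lemma mkGraph_sdegU (ha : a₀ ∈ S) (ha0 : 0 < a₀) (hb0 : b₀ < 0)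
    (u : (mkGraph S a₀ b₀ ha ha0).U) :
    (mkGraph S a₀ b₀ ha ha0).sdegU u = (u : Idx S).1.1 := by
  show (((Finset.univ.filter fun v : Idx S => decide (ent S a₀ b₀ u v = 1) = true).card : ℤ) -
      ((Finset.univ.filter fun v : Idx S => decide (ent S a₀ b₀ u v = -1) = true).card : ℤ)) = _
  simp only [decide_eq_true_eq]
  rw [card_sub_card (fun v => ent S a₀ b₀ u v) (fun v => ent_mem S a₀ b₀ ha0 hb0 u v)]
  exact sum_ent_row S a₀ b₀ u

lemma mkGraph_sdegV (ha : a₀ ∈ S) (ha0 : 0 < a₀) (hb0 : b₀ < 0)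
    (v : (mkGraph S a₀ b₀ ha ha0).V) :
    (mkGraph S a₀ b₀ ha ha0).sdegV v = (v : Idx S).1.1 := by
  show (((Finset.univ.filter fun u : Idx S => decide (ent S a₀ b₀ u v = 1) = true).card : ℤ) -
      ((Finset.univ.filter fun u : Idx S => decide (ent S a₀ b₀ u v = -1) = true).card : ℤ)) = _
  simp only [decide_eq_true_eq]
  rw [card_sub_card (fun u => ent S a₀ b₀ u v) (fun u => ent_mem S a₀ b₀ ha0 hb0 u v)]
  exact sum_ent_col S a₀ b₀ v

lemma mkGraph_adj {S : Finset ℤ} {a₀ b₀ : ℤ} (ha : a₀ ∈ S) (ha0 : 0 < a₀) (hb0 : b₀ < 0)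
    (u v : Idx S) (h : ent S a₀ b₀ u v ≠ 0) :
    (mkGraph S a₀ b₀ ha ha0).graph.Adj (Sum.inl u) (Sum.inr v) := by
  show (mkGraph S a₀ b₀ ha ha0).adjFun (Sum.inl u) (Sum.inr v)
  show decide (ent S a₀ b₀ u v = 1) = true ∨ decide (ent S a₀ b₀ u v = -1) = true
  simp only [decide_eq_true_eq]
  rcases ent_mem S a₀ b₀ ha0 hb0 u v with h' | h' | h' <;> [exact Or.inl h'; omega; exact Or.inr h']

end SDSaux

namespace SDSaux

section Conn

variable {S : Finset ℤ} {a₀ b₀ : ℤ}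

lemma ent_block_ne (ha0 : 0 < a₀) (hb0 : b₀ < 0) (x : {x : ℤ // x ∈ S}) (c : Bool)
    (r s : Fin x.1.natAbs) : ent S a₀ b₀ ⟨x, (c, r)⟩ ⟨x, (c, s)⟩ ≠ 0 := by
  have hcon : ¬(((r : ℕ) = 0) ∧ ((s : ℕ) = 0) ∧
      ((0 < x.1 ∧ x.1 = b₀) ∨ (x.1 < 0 ∧ x.1 = a₀))) := by omega
  have h1 : base S ⟨x, (c, r)⟩ ⟨x, (c, s)⟩ = if 0 < x.1 then 1 else -1 := if_pos ⟨rfl, rfl⟩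
  have h2 : ov S a₀ b₀ ⟨x, (c, r)⟩ ⟨x, (c, s)⟩ = 0 := if_neg hcon
  unfold ent
  rw [h1, h2]
  split_ifs <;> omega

lemma ent_hubB_ne (hb : b₀ ∈ S) (ha0 : 0 < a₀) (hb0 : b₀ < 0) (x : {x : ℤ // x ∈ S})
    (hx : 0 < x.1) (c d : Bool) (r : Fin x.1.natAbs) (hr : (r : ℕ) = 0)
    (t : Fin ((⟨b₀, hb⟩ : {x : ℤ // x ∈ S}) : ℤ).natAbs) (ht : (t : ℕ) = 0) :
    ent S a₀ b₀ ⟨x, (c, r)⟩ ⟨⟨b₀, hb⟩, (d, t)⟩ ≠ 0 := by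
  have hcont : ¬(x = (⟨b₀, hb⟩ : {x : ℤ // x ∈ S}) ∧ c = d) := by
    rintro ⟨hc, -⟩
    have hval : x.1 = b₀ := congrArg Subtype.val hc
    omega
  have h1 : base S ⟨x, (c, r)⟩ ⟨⟨b₀, hb⟩, (d, t)⟩ = 0 := if_neg hcont
  have h2 : ov S a₀ b₀ ⟨x, (c, r)⟩ ⟨⟨b₀, hb⟩, (d, t)⟩ = if c = d then 1 else -1 :=
    if_pos ⟨hr, ht, Or.inl ⟨hx, rfl⟩⟩
  unfold ent
  rw [h1, h2]
  split_ifs <;> omega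

lemma ent_hubA_ne (ha : a₀ ∈ S) (ha0 : 0 < a₀) (hb0 : b₀ < 0) (x : {x : ℤ // x ∈ S})
    (hx : x.1 < 0) (c d : Bool) (r : Fin x.1.natAbs) (hr : (r : ℕ) = 0)
    (t : Fin ((⟨a₀, ha⟩ : {x : ℤ // x ∈ S}) : ℤ).natAbs) (ht : (t : ℕ) = 0) :
    ent S a₀ b₀ ⟨x, (c, r)⟩ ⟨⟨a₀, ha⟩, (d, t)⟩ ≠ 0 := by
  have hcont : ¬(x = (⟨a₀, ha⟩ : {x : ℤ // x ∈ S}) ∧ c = d) := by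
    rintro ⟨hc, -⟩
    have hval : x.1 = a₀ := congrArg Subtype.val hc
    omega
  have h1 : base S ⟨x, (c, r)⟩ ⟨⟨a₀, ha⟩, (d, t)⟩ = 0 := if_neg hcont
  have h2 : ov S a₀ b₀ ⟨x, (c, r)⟩ ⟨⟨a₀, ha⟩, (d, t)⟩ = if c = d then 1 else -1 :=
    if_pos ⟨hr, ht, Or.inr ⟨hx, rfl⟩⟩
  unfold ent
  rw [h1, h2]
  split_ifs <;> omega

/-- Hub vertex on the `V` side. -/
def hubB (hb : b₀ ∈ S) (hb0 : b₀ < 0) : Idx S :=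
  ⟨⟨b₀, hb⟩, (false, ⟨0, Int.natAbs_pos.mpr (show b₀ ≠ 0 by omega)⟩)⟩

lemma reach_row (ha : a₀ ∈ S) (hb : b₀ ∈ S) (ha0 : 0 < a₀) (hb0 : b₀ < 0)
    (hS : ∀ x ∈ S, x ≠ (0 : ℤ)) (u : Idx S) :
    (mkGraph S a₀ b₀ ha ha0).graph.Reachable (Sum.inl u) (Sum.inr (hubB hb hb0)) := by
  obtain ⟨x, c, r⟩ := u
  have hx0 : x.1 ≠ 0 := hS x.1 x.2
  have hposn : (0 : ℕ) < x.1.natAbs := Int.natAbs_pos.mpr hx0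
  set z0 : Fin x.1.natAbs := ⟨0, hposn⟩ with hz0
  have h1 : (mkGraph S a₀ b₀ ha ha0).graph.Adj (Sum.inl ⟨x, (c, r)⟩) (Sum.inr ⟨x, (c, z0)⟩) :=
    mkGraph_adj ha ha0 hb0 _ _ (ent_block_ne ha0 hb0 x c r z0)
  have h2 : (mkGraph S a₀ b₀ ha ha0).graph.Adj (Sum.inl ⟨x, (c, z0)⟩) (Sum.inr ⟨x, (c, z0)⟩) :=
    mkGraph_adj ha ha0 hb0 _ _ (ent_block_ne ha0 hb0 x c z0 z0)
  rcases hx0.lt_or_gt with hneg | hpos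
  · -- x negative: go through the positive hub a₀
    have hA : (0 : ℕ) < a₀.natAbs := Int.natAbs_pos.mpr (by omega)
    set hubA : Idx S := ⟨⟨a₀, ha⟩, (false, ⟨0, hA⟩)⟩ with hhubA
    have h3 : (mkGraph S a₀ b₀ ha ha0).graph.Adj (Sum.inl ⟨x, (c, z0)⟩) (Sum.inr hubA) :=
      mkGraph_adj ha ha0 hb0 _ _ (ent_hubA_ne ha ha0 hb0 x hneg c false z0 rfl _ rfl)
    have h4 : (mkGraph S a₀ b₀ ha ha0).graph.Adj (Sum.inl hubA) (Sum.inr hubA) :=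
      mkGraph_adj ha ha0 hb0 _ _ (ent_block_ne ha0 hb0 ⟨a₀, ha⟩ false _ _)
    have h5 : (mkGraph S a₀ b₀ ha ha0).graph.Adj (Sum.inl hubA) (Sum.inr (hubB hb hb0)) :=
      mkGraph_adj ha ha0 hb0 _ _ (ent_hubB_ne hb ha0 hb0 ⟨a₀, ha⟩ ha0 false false _ rfl _ rfl)
    exact h1.reachable.trans (h2.symm.reachable.trans (h3.reachable.trans
      (h4.symm.reachable.trans h5.reachable)))
  · have h3 : (mkGraph S a₀ b₀ ha ha0).graph.Adj (Sum.inl ⟨x, (c, z0)⟩)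
        (Sum.inr (hubB hb hb0)) :=
      mkGraph_adj ha ha0 hb0 _ _ (ent_hubB_ne hb ha0 hb0 x hpos c false z0 rfl _ rfl)
    exact h1.reachable.trans (h2.symm.reachable.trans h3.reachable)

lemma reach_col (ha : a₀ ∈ S) (hb : b₀ ∈ S) (ha0 : 0 < a₀) (hb0 : b₀ < 0)
    (hS : ∀ x ∈ S, x ≠ (0 : ℤ)) (v : Idx S) :
    (mkGraph S a₀ b₀ ha ha0).graph.Reachable (Sum.inr v) (Sum.inr (hubB hb hb0)) := by
  obtain ⟨y, d, s⟩ := v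
  have hy0 : y.1 ≠ 0 := hS y.1 y.2
  have hposn : (0 : ℕ) < y.1.natAbs := Int.natAbs_pos.mpr hy0
  set z0 : Fin y.1.natAbs := ⟨0, hposn⟩ with hz0
  have h1 : (mkGraph S a₀ b₀ ha ha0).graph.Adj (Sum.inl ⟨y, (d, z0)⟩) (Sum.inr ⟨y, (d, s)⟩) :=
    mkGraph_adj ha ha0 hb0 _ _ (ent_block_ne ha0 hb0 y d z0 s)
  exact h1.symm.reachable.trans (reach_row ha hb ha0 hb0 hS ⟨y, (d, z0)⟩)

lemma mkGraph_connected (ha : a₀ ∈ S) (hb : b₀ ∈ S) (ha0 : 0 < a₀) (hb0 : b₀ < 0)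
    (hS : ∀ x ∈ S, x ≠ (0 : ℤ)) : (mkGraph S a₀ b₀ ha ha0).Connected := by
  rw [SignedBipartiteGraph.Connected, SimpleGraph.connected_iff]
  have key : ∀ c : (mkGraph S a₀ b₀ ha ha0).U ⊕ (mkGraph S a₀ b₀ ha ha0).V,
      (mkGraph S a₀ b₀ ha ha0).graph.Reachable c (Sum.inr (hubB hb hb0)) := by
    rintro (u | v)
    · exact reach_row ha hb ha0 hb0 hS u
    · exact reach_col ha hb ha0 hb0 hS v
  exact ⟨fun a b => (key a).trans (key b).symm, ⟨Sum.inr (hubB hb hb0)⟩⟩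

end Conn

end SDSaux

/-- If S₁ is a finite nonempty set of positive integers and S₂ a finite
nonempty set of negative integers, then S₁ ∪ S₂ is the signed degree set of
some connected signed bipartite graph. -/
theorem signed_degree_set_pos_union_neg (S₁ S₂ : Finset ℤ)
    (h₁ : S₁.Nonempty) (h₂ : S₂.Nonempty)
    (hpos : ∀ x ∈ S₁, 0 < x) (hneg : ∀ x ∈ S₂, x < 0) :
    ∃ G : SignedBipartiteGraph, G.Connected ∧ G.sdegSet = ↑S₁ ∪ ↑S₂ := by
  obtain ⟨a₀, ha₁⟩ := h₁
  obtain ⟨b₀, hb₂⟩ := h₂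
  have ha0 : 0 < a₀ := hpos a₀ ha₁
  have hb0 : b₀ < 0 := hneg b₀ hb₂
  set S : Finset ℤ := S₁ ∪ S₂ with hSdef
  have ha : a₀ ∈ S := Finset.mem_union_left _ ha₁
  have hb : b₀ ∈ S := Finset.mem_union_right _ hb₂
  have hS : ∀ x ∈ S, x ≠ (0 : ℤ) := by
    intro x hx
    rcases Finset.mem_union.mp hx with h | h
    · exact (hpos x h).ne'
    · exact (hneg x h).ne
  refine ⟨SDSaux.mkGraph S a₀ b₀ ha ha0, SDSaux.mkGraph_connected ha hb ha0 hb0 hS, ?_⟩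
  have hrange : ∀ f : SDSaux.Idx S → ℤ, (∀ u, f u = u.1.1) → Set.range f = (S : Set ℤ) := by
    intro f hf
    ext z
    constructor
    · rintro ⟨u, rfl⟩
      rw [hf u]
      exact u.1.2
    · intro hz
      have hz' : z ∈ S := hz
      refine ⟨⟨⟨z, hz'⟩, (false, ⟨0, Int.natAbs_pos.mpr (hS z hz')⟩)⟩, ?_⟩
      rw [hf]
  have hU : Set.range (SDSaux.mkGraph S a₀ b₀ ha ha0).sdegU = (S : Set ℤ) :=
    hrange _ (fun u => SDSaux.mkGraph_sdegU ha ha0 hb0 u)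
  have hV : Set.range (SDSaux.mkGraph S a₀ b₀ ha ha0).sdegV = (S : Set ℤ) :=
    hrange _ (fun v => SDSaux.mkGraph_sdegV ha ha0 hb0 v)
  rw [SignedBipartiteGraph.sdegSet, hU, hV, Set.union_self, hSdef, Finset.coe_union]
end
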